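/- Let K ≥ 2 be even, let m ≥ 1 be an integer, set N = mK, and let α ∈ [0,1). Set K* = (NK/(2N+K))·(1 − α/(2−α)). Then any pure strategy of the Colonel Blotto game B_α(N,K) that allocates a strictly positive number of units to strictly fewer than K* battlefields is never a best response to any strategy of the opponent, and hence is not used with positive probability in any Nash equilibrium of B_α(N,K). -/

import Mathlib

open Finset

/-- The set of pure strategies: allocations of `N` units of the resource
over `K` battlefields. -/
def pureStrats (K N : ℕ) : Finset (Fin K → ℕ) := Finset.Nat.antidiagonalTuple K N

/-- Payoff in the Colonel Blotto game `B_α(N,K)` of playing `s` against `t`: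
`π(s,t) = Σ_k [1_{s_k > t_k} + (α/2)·1_{s_k = t_k}]`. -/
noncomputable def payoff (α : ℝ) {K : ℕ} (s t : Fin K → ℕ) : ℝ :=
  ∑ k, ((if t k < s k then (1 : ℝ) else 0) + α / 2 * (if s k = t k then 1 else 0))

/-- `σ` is a mixed strategy: a probability distribution on the pure strategies. -/
def IsMixed (K N : ℕ) (σ : (Fin K → ℕ) → ℝ) : Prop :=
  (∀ s, 0 ≤ σ s) ∧ (∀ s, s ∉ pureStrats K N → σ s = 0) ∧
    ∑ s ∈ pureStrats K N, σ s = 1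

/-- Expected payoff of the mixed strategy `σ` against the mixed strategy `τ`. -/
noncomputable def expPayoff (α : ℝ) (K N : ℕ) (σ τ : (Fin K → ℕ) → ℝ) : ℝ :=
  ∑ s ∈ pureStrats K N, ∑ t ∈ pureStrats K N, σ s * τ t * payoff α s t

/-- `(σA, σB)` is a mixed-strategy Nash equilibrium: both are mixed strategies and
neither player can strictly improve by a unilateral deviation. -/
def IsNashEq (α : ℝ) (K N : ℕ) (σA σB : (Fin K → ℕ) → ℝ) : Prop :=
  IsMixed K N σA ∧ IsMixed K N σB ∧
    (∀ σ', IsMixed K N σ' → expPayoff α K N σ' σB ≤ expPayoff α K N σA σB) ∧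
    (∀ τ', IsMixed K N τ' → expPayoff α K N τ' σA ≤ expPayoff α K N σB σA)

/-- The marginal distribution of `σ` at battlefield `k`, evaluated at `x`. -/
noncomputable def marginal (K N : ℕ) (σ : (Fin K → ℕ) → ℝ) (k : Fin K) (x : ℕ) : ℝ :=
  ∑ s ∈ (pureStrats K N).filter (fun s => s k = x), σ s

/-- `σ` induces uniform marginals on `{0,1,…,2m}` at every battlefield. -/
def UniformMarginals (K N m : ℕ) (σ : (Fin K → ℕ) → ℝ) : Prop :=
  ∀ k x, marginal K N σ k x = if x ≤ 2 * m then (1 : ℝ) / (2 * m + 1) else 0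

/-- Expected payoff of the pure strategy `s` against the mixed strategy `τ`. -/
noncomputable def purePayoff (α : ℝ) (K N : ℕ) (s : Fin K → ℕ) (τ : (Fin K → ℕ) → ℝ) : ℝ :=
  ∑ t ∈ pureStrats K N, τ t * payoff α s t

lemma mem_pureStrats {K N : ℕ} {s : Fin K → ℕ} :
    s ∈ pureStrats K N ↔ ∑ k, s k = N := Finset.Nat.mem_antidiagonalTuple

lemma expPayoff_eq (α : ℝ) (K N : ℕ) (σ τ : (Fin K → ℕ) → ℝ) :
    expPayoff α K N σ τ = ∑ s ∈ pureStrats K N, σ s * purePayoff α K N s τ := by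
  unfold expPayoff purePayoff
  refine Finset.sum_congr rfl fun s _ => ?_
  rw [Finset.mul_sum]
  exact Finset.sum_congr rfl fun t _ => by ring

/-- the deviation strategy: `x` on the first half of the battlefields, `2m - x` on the rest. -/
def wstrat (K m x : ℕ) : Fin K → ℕ := fun k => if (k : ℕ) < K / 2 then x else 2 * m - x

lemma wstrat_sum (K m x : ℕ) (hKeven : Even K) (hx : x ≤ 2 * m) :
    ∑ k, wstrat K m x k = m * K := by
  obtain ⟨j, hj⟩ := hKeven
  have hK2 : K / 2 = j := by omega
  have h1 : ∑ k, wstrat K m x k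
      = ∑ i ∈ Finset.range K, (if i < K / 2 then x else 2 * m - x) :=
    Fin.sum_univ_eq_sum_range (fun i => if i < K / 2 then x else 2 * m - x) K
  rw [h1, Finset.range_eq_Ico,
    ← Finset.sum_Ico_consecutive _ (Nat.zero_le j) (by omega : j ≤ K)]
  have h2 : ∑ i ∈ Finset.Ico 0 j, (if i < K / 2 then x else 2 * m - x) = j * x := by
    rw [Finset.sum_congr rfl (fun i hi => if_pos (by simp at hi; omega))]
    simp [mul_comm]
  have h3 : ∑ i ∈ Finset.Ico j K, (if i < K / 2 then x else 2 * m - x) = j * (2 * m - x) := by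
    rw [Finset.sum_congr rfl (fun i hi => if_neg (by simp at hi; omega))]
    simp [hj, mul_comm]
  rw [h2, h3]
  have h4 : x + (2 * m - x) = 2 * m := by omega
  rw [← Nat.mul_add, h4, hj]; ring

lemma wstrat_mem (K m N x : ℕ) (hKeven : Even K) (hx : x ≤ 2 * m) (hN : N = m * K) :
    wstrat K m x ∈ pureStrats K N :=
  mem_pureStrats.mpr (by rw [hN]; exact wstrat_sum K m x hKeven hx)

lemma count_gt (y n : ℕ) :
    ∑ a ∈ Finset.range n, (if y < a then (1 : ℝ) else 0) = ((n - (y + 1) : ℕ) : ℝ) := by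
  induction n with
  | zero => simp
  | succ n ih =>
    rw [Finset.sum_range_succ, ih]
    by_cases h : y < n
    · have he : n + 1 - (y + 1) = (n - (y + 1)) + 1 := by omega
      simp [h, he]
    · have h1 : n + 1 - (y + 1) = 0 := by omega
      have h2 : n - (y + 1) = 0 := by omega
      simp [h, h1, h2]

lemma G_lb (α : ℝ) (hα0 : 0 ≤ α) (hα1 : α < 1) (m y : ℕ) :
    2 * (m : ℝ) - y + α / 2 ≤ ∑ a ∈ Finset.range (2 * m + 1),
      ((if y < a then (1 : ℝ) else 0) + α / 2 * (if a = y then 1 else 0)) := by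
  rw [Finset.sum_add_distrib, count_gt, ← Finset.mul_sum,
    Finset.sum_ite_eq' (Finset.range (2 * m + 1)) y (fun _ => (1 : ℝ))]
  by_cases h : y < 2 * m + 1
  · simp only [Finset.mem_range, h, if_true]
    have hle : y ≤ 2 * m := by omega
    have he : ((2 * m + 1 - (y + 1) : ℕ) : ℝ) = 2 * m - y := by
      have : 2 * m + 1 - (y + 1) = 2 * m - y := by omega
      rw [this]
      push_cast [hle]
      ring
    rw [he]; linarith
  · simp only [Finset.mem_range, h, if_false]
    have h1 : 2 * m + 1 - (y + 1) = 0 := by omega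
    have h2 : (2 * (m : ℝ) + 1) ≤ y := by exact_mod_cast (by omega : 2 * m + 1 ≤ y)
    rw [h1]
    push_cast
    linarith

lemma sigmaStar_payoff (α : ℝ) (hα0 : 0 ≤ α) (hα1 : α < 1) (K m N : ℕ)
    (hKeven : Even K) (hN : N = m * K)
    (t : Fin K → ℕ) (ht : t ∈ pureStrats K N) :
    (m : ℝ) * K + α * K / 2 ≤ ∑ x ∈ Finset.range (2 * m + 1), payoff α (wstrat K m x) t := by
  have hswap : ∑ x ∈ Finset.range (2 * m + 1), payoff α (wstrat K m x) t
      = ∑ k : Fin K, ∑ x ∈ Finset.range (2 * m + 1),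
          ((if t k < wstrat K m x k then (1 : ℝ) else 0)
            + α / 2 * (if wstrat K m x k = t k then 1 else 0)) := by
    unfold payoff; rw [Finset.sum_comm]
  rw [hswap]
  have hfield : ∀ k : Fin K, 2 * (m : ℝ) - (t k) + α / 2
      ≤ ∑ x ∈ Finset.range (2 * m + 1),
          ((if t k < wstrat K m x k then (1 : ℝ) else 0)
            + α / 2 * (if wstrat K m x k = t k then 1 else 0)) := by
    intro k
    by_cases hk : (k : ℕ) < K / 2
    · have he : ∀ x, wstrat K m x k = x := fun x => if_pos hk
      simp only [he]
      exact G_lb α hα0 hα1 m (t k)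
    · have he : ∀ x, wstrat K m x k = 2 * m - x := fun x => if_neg hk
      simp only [he]
      have hr := Finset.sum_range_reflect
        (fun a => (if t k < a then (1 : ℝ) else 0) + α / 2 * (if a = t k then 1 else 0))
        (2 * m + 1)
      have he2 : ∀ x ∈ Finset.range (2 * m + 1), 2 * m + 1 - 1 - x = 2 * m - x := by
        intro x _; omega
      rw [Finset.sum_congr rfl (fun x hx => by rw [he2 x hx])] at hr
      rw [hr]
      exact G_lb α hα0 hα1 m (t k)
  calc (m : ℝ) * K + α * K / 2
      = ∑ k : Fin K, (2 * (m : ℝ) - (t k) + α / 2) := by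
        have hts : ∑ k, t k = N := mem_pureStrats.mp ht
        have htr : ∑ k : Fin K, ((t k : ℝ)) = (N : ℝ) := by exact_mod_cast congrArg Nat.cast hts
        rw [Finset.sum_add_distrib, Finset.sum_sub_distrib, htr]
        simp [Finset.card_univ, hN]
        push_cast
        ring
    _ ≤ _ := Finset.sum_le_sum (fun k _ => hfield k)

noncomputable def sigmaStar (K m : ℕ) : (Fin K → ℕ) → ℝ :=
  fun t => (∑ x ∈ Finset.range (2 * m + 1), if t = wstrat K m x then 1 else 0)
    / (2 * (m : ℝ) + 1)

lemma sigmaStar_mixed (K m N : ℕ) (hKeven : Even K) (hN : N = m * K) :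
    IsMixed K N (sigmaStar K m) := by
  have hD : (0 : ℝ) < 2 * (m : ℝ) + 1 := by positivity
  refine ⟨?_, ?_, ?_⟩
  · intro t
    apply div_nonneg _ hD.le
    apply Finset.sum_nonneg; intro x _; split <;> norm_num
  · intro t ht
    unfold sigmaStar
    rw [Finset.sum_eq_zero, zero_div]
    intro x hx
    rw [if_neg]
    rintro rfl
    exact ht (wstrat_mem K m N x hKeven (by simp at hx; omega) hN)
  · unfold sigmaStar
    rw [← Finset.sum_div, Finset.sum_comm]
    have h1 : ∀ x ∈ Finset.range (2 * m + 1),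
        ∑ t ∈ pureStrats K N, (if t = wstrat K m x then (1 : ℝ) else 0) = 1 := by
      intro x hx
      rw [Finset.sum_ite_eq' (pureStrats K N) (wstrat K m x) (fun _ => (1 : ℝ)),
        if_pos (wstrat_mem K m N x hKeven (by simp at hx; omega) hN)]
    rw [Finset.sum_congr rfl h1]
    simp
    exact hD.ne'

lemma expPayoff_sigmaStar_lb (α : ℝ) (hα0 : 0 ≤ α) (hα1 : α < 1) (K m N : ℕ)
    (hKeven : Even K) (hN : N = m * K)
    (τ : (Fin K → ℕ) → ℝ) (hτ : IsMixed K N τ) :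
    ((m : ℝ) * K + α * K / 2) / (2 * (m : ℝ) + 1) ≤ expPayoff α K N (sigmaStar K m) τ := by
  have hD : (0 : ℝ) < 2 * (m : ℝ) + 1 := by positivity
  set L : ℝ := ((m : ℝ) * K + α * K / 2) / (2 * (m : ℝ) + 1) with hL
  have key : ∀ t ∈ pureStrats K N,
      L ≤ ∑ u ∈ pureStrats K N, sigmaStar K m u * payoff α u t := by
    intro t ht
    have hEq : ∑ u ∈ pureStrats K N, sigmaStar K m u * payoff α u t
        = (∑ x ∈ Finset.range (2 * m + 1), payoff α (wstrat K m x) t) / (2 * (m : ℝ) + 1) := by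
      unfold sigmaStar
      simp_rw [div_mul_eq_mul_div, ← Finset.sum_div]
      congr 1
      simp_rw [Finset.sum_mul, ite_mul, one_mul, zero_mul]
      rw [Finset.sum_comm]
      refine Finset.sum_congr rfl fun x hx => ?_
      rw [Finset.sum_ite_eq' (pureStrats K N) (wstrat K m x) (fun u => payoff α u t),
        if_pos (wstrat_mem K m N x hKeven (by simp at hx; omega) hN)]
    rw [hEq, hL]
    exact (div_le_div_iff_of_pos_right hD).mpr
      (sigmaStar_payoff α hα0 hα1 K m N hKeven hN t ht)
  have expand : expPayoff α K N (sigmaStar K m) τ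
      = ∑ t ∈ pureStrats K N, τ t * ∑ u ∈ pureStrats K N, sigmaStar K m u * payoff α u t := by
    unfold expPayoff
    rw [Finset.sum_comm]
    refine Finset.sum_congr rfl fun t _ => ?_
    rw [Finset.mul_sum]
    exact Finset.sum_congr rfl fun u _ => by ring
  have h1 : L = ∑ t ∈ pureStrats K N, τ t * L := by
    rw [← Finset.sum_mul, hτ.2.2, one_mul]
  rw [expand, h1]
  exact Finset.sum_le_sum fun t ht =>
    mul_le_mul_of_nonneg_left (key t ht) (hτ.1 t)

lemma payoff_ub (α : ℝ) (hα0 : 0 ≤ α) (hα2 : α ≤ 2) (K : ℕ) (s t : Fin K → ℕ) :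
    payoff α s t ≤ ((Finset.univ.filter (fun k => 0 < s k)).card : ℝ)
      + α / 2 * ((K : ℝ) - ((Finset.univ.filter (fun k => 0 < s k)).card : ℝ)) := by
  classical
  set c := (Finset.univ.filter (fun k : Fin K => 0 < s k)).card with hc
  have hcle : c ≤ K := le_trans (Finset.card_filter_le _ _) (by simp)
  have hcard2 : (Finset.univ.filter (fun k : Fin K => ¬ 0 < s k)).card = K - c := by
    have h := Finset.card_filter_add_card_filter_not
      (s := (Finset.univ : Finset (Fin K))) (p := fun k => 0 < s k)
    simp only [Finset.card_univ, Fintype.card_fin] at h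
    omega
  unfold payoff
  rw [← Finset.sum_filter_add_sum_filter_not Finset.univ (fun k => 0 < s k)]
  have hb1 : ∑ k ∈ Finset.univ.filter (fun k : Fin K => 0 < s k),
      ((if t k < s k then (1 : ℝ) else 0) + α / 2 * (if s k = t k then 1 else 0)) ≤ c • (1 : ℝ) := by
    apply Finset.sum_le_card_nsmul
    intro k _
    split_ifs with h1 h2 <;> first | (exfalso; omega) | linarith
  have hb2 : ∑ k ∈ Finset.univ.filter (fun k : Fin K => ¬ 0 < s k),
      ((if t k < s k then (1 : ℝ) else 0) + α / 2 * (if s k = t k then 1 else 0))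
        ≤ (K - c) • (α / 2) := by
    rw [← hcard2]
    apply Finset.sum_le_card_nsmul
    intro k hk
    simp only [Finset.mem_filter] at hk
    have hk0 : s k = 0 := by omega
    have hnt : ¬ t k < s k := by omega
    split_ifs <;> linarith
  have hcast : ((K - c : ℕ) : ℝ) = (K : ℝ) - c := by
    push_cast [hcle]; ring
  calc _ ≤ c • (1 : ℝ) + (K - c) • (α / 2) := add_le_add hb1 hb2
    _ = (c : ℝ) + α / 2 * ((K : ℝ) - c) := by
        rw [nsmul_eq_mul, nsmul_eq_mul, hcast]; ring

lemma purePayoff_ub (α : ℝ) (hα0 : 0 ≤ α) (hα2 : α ≤ 2) (K N : ℕ)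
    (s : Fin K → ℕ) (τ : (Fin K → ℕ) → ℝ) (hτ : IsMixed K N τ) :
    purePayoff α K N s τ ≤ ((Finset.univ.filter (fun k => 0 < s k)).card : ℝ)
      + α / 2 * ((K : ℝ) - ((Finset.univ.filter (fun k => 0 < s k)).card : ℝ)) := by
  unfold purePayoff
  set U := ((Finset.univ.filter (fun k : Fin K => 0 < s k)).card : ℝ)
    + α / 2 * ((K : ℝ) - ((Finset.univ.filter (fun k : Fin K => 0 < s k)).card : ℝ)) with hU
  calc ∑ t ∈ pureStrats K N, τ t * payoff α s t
      ≤ ∑ t ∈ pureStrats K N, τ t * U :=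
        Finset.sum_le_sum fun t _ =>
          mul_le_mul_of_nonneg_left (payoff_ub α hα0 hα2 K s t) (hτ.1 t)
    _ = U := by rw [← Finset.sum_mul, hτ.2.2, one_mul]

lemma support_best (α : ℝ) (K N : ℕ) (σ τ : (Fin K → ℕ) → ℝ) (hσ : IsMixed K N σ)
    (s : Fin K → ℕ) (hs : s ∈ pureStrats K N) (hpos : 0 < σ s)
    (hopt : ∀ σ', IsMixed K N σ' → expPayoff α K N σ' τ ≤ expPayoff α K N σ τ) :
    ∀ σ', IsMixed K N σ' → expPayoff α K N σ' τ ≤ purePayoff α K N s τ := by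
  by_contra h
  push_neg at h
  obtain ⟨σ', hσ', hgt⟩ := h
  set σ2 : (Fin K → ℕ) → ℝ :=
    fun t => σ t + σ s * (σ' t - (if t = s then 1 else 0)) with hσ2
  have hind : ∑ t ∈ pureStrats K N, (if t = s then (1 : ℝ) else 0) = 1 := by
    rw [Finset.sum_ite_eq' (pureStrats K N) s (fun _ => (1 : ℝ)), if_pos hs]
  have hmix2 : IsMixed K N σ2 := by
    refine ⟨?_, ?_, ?_⟩
    · intro t
      by_cases ht : t = s
      · subst ht
        have he : σ2 t = σ t * σ' t := by simp only [hσ2]; split_ifs with h <;> first | ring | exact absurd trivial h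
        rw [he]
        exact mul_nonneg (hσ.1 t) (hσ'.1 t)
      · have he : σ2 t = σ t + σ s * σ' t := by simp only [hσ2, if_neg ht]; ring
        rw [he]
        have := hσ.1 t
        have := mul_nonneg hpos.le (hσ'.1 t)
        linarith
    · intro t ht
      have h1 : σ t = 0 := hσ.2.1 t ht
      have h2 : σ' t = 0 := hσ'.2.1 t ht
      have h3 : t ≠ s := fun he => ht (he ▸ hs)
      simp [hσ2, h1, h2, h3]
    · simp only [hσ2]
      rw [Finset.sum_add_distrib, hσ.2.2, ← Finset.mul_sum, Finset.sum_sub_distrib,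
        hσ'.2.2, hind]
      ring
  have hindP : ∑ t ∈ pureStrats K N, (if t = s then (1 : ℝ) else 0) * purePayoff α K N t τ
      = purePayoff α K N s τ := by
    simp_rw [ite_mul, one_mul, zero_mul]
    rw [Finset.sum_ite_eq' (pureStrats K N) s (fun t => purePayoff α K N t τ), if_pos hs]
  have hE : expPayoff α K N σ2 τ
      = expPayoff α K N σ τ + σ s * (expPayoff α K N σ' τ - purePayoff α K N s τ) := by
    rw [expPayoff_eq α K N σ2 τ, expPayoff_eq α K N σ τ, expPayoff_eq α K N σ' τ]
    have hterm : ∀ t ∈ pureStrats K N, σ2 t * purePayoff α K N t τ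
        = σ t * purePayoff α K N t τ + σ s * (σ' t * purePayoff α K N t τ)
          - σ s * ((if t = s then (1 : ℝ) else 0) * purePayoff α K N t τ) := by
      intro t _; simp only [hσ2]; ring
    rw [Finset.sum_congr rfl hterm, Finset.sum_sub_distrib, Finset.sum_add_distrib,
      ← Finset.mul_sum, ← Finset.mul_sum, hindP]
    ring
  have hle := hopt σ2 hmix2
  rw [hE] at hle
  nlinarith

theorem stmt5 (K m N : ℕ) (hK : 2 ≤ K) (hKeven : Even K) (hm : 1 ≤ m) (hN : N = m * K)
    (α : ℝ) (hα0 : 0 ≤ α) (hα1 : α < 1)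
    (s : Fin K → ℕ) (hs : s ∈ pureStrats K N)
    (hfew : (((Finset.univ.filter (fun k => 0 < s k)).card : ℝ)) <
      ((N : ℝ) * K / (2 * (N : ℝ) + K)) * (1 - α / (2 - α))) :
    (∀ τ, IsMixed K N τ →
      ¬ (∀ σ', IsMixed K N σ' → expPayoff α K N σ' τ ≤ purePayoff α K N s τ)) ∧
    (∀ σA σB, IsNashEq α K N σA σB → σA s = 0 ∧ σB s = 0) := by
  classical
  set c : ℝ := ((Finset.univ.filter (fun k => 0 < s k)).card : ℝ) with hcdef
  -- arithmetic: the upper bound is strictly below the lower bound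
  have hKpos : (0 : ℝ) < K := by exact_mod_cast (by omega : 0 < K)
  have hmpos : (0 : ℝ) < m := by exact_mod_cast hm
  have h2a : (0 : ℝ) < 2 - α := by linarith
  have hDpos : (0 : ℝ) < 2 * (m : ℝ) + 1 := by positivity
  have hNr : (N : ℝ) = (m : ℝ) * K := by rw [hN]; push_cast; ring
  have hrhs : ((N : ℝ) * K / (2 * (N : ℝ) + K)) * (1 - α / (2 - α))
      = 2 * (m : ℝ) * K * (1 - α) / ((2 * (m : ℝ) + 1) * (2 - α)) := by
    rw [hNr]
    have hd1 : 2 * ((m : ℝ) * K) + K ≠ 0 := by nlinarith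
    field_simp
    ring
  have hc' : c * ((2 * (m : ℝ) + 1) * (2 - α)) < 2 * (m : ℝ) * K * (1 - α) := by
    rw [hrhs] at hfew
    exact (lt_div_iff₀ (by positivity)).mp hfew
  have hUL : c + α / 2 * ((K : ℝ) - c) < ((m : ℝ) * K + α * K / 2) / (2 * (m : ℝ) + 1) := by
    rw [lt_div_iff₀ hDpos]
    nlinarith [hc']
  have key : ∀ τ, IsMixed K N τ →
      ¬ (∀ σ', IsMixed K N σ' → expPayoff α K N σ' τ ≤ purePayoff α K N s τ) := by
    intro τ hτ hbest
    have h1 := hbest (sigmaStar K m) (sigmaStar_mixed K m N hKeven hN)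
    have h2 := expPayoff_sigmaStar_lb α hα0 hα1 K m N hKeven hN τ hτ
    have h3 := purePayoff_ub α hα0 (by linarith) K N s τ hτ
    rw [← hcdef] at h3
    linarith
  refine ⟨key, ?_⟩
  rintro σA σB ⟨hA, hB, hbrA, hbrB⟩
  constructor
  · by_contra hne
    have hpos : 0 < σA s := lt_of_le_of_ne (hA.1 s) (Ne.symm hne)
    exact key σB hB (support_best α K N σA σB hA s hs hpos hbrA)
  · by_contra hne
    have hpos : 0 < σB s := lt_of_le_of_ne (hB.1 s) (Ne.symm hne)
    exact key σA hA (support_best α K N σB σA hB s hs hpos hbrB)
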